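/- arXiv:2510.00649 — 2 statements merged into one kernel-verified Lean document; each statement's English description precedes it below -/
import Mathlib

section
/- Let T̃ and G be unitary complex n×n matrices, let E = R(G) − R(T̃), let α = Re((1/n)·Tr(T̃†G)) and β = Im((1/n)·Tr(T̃†G)), and define the phase-invariant fidelity F = α² + β² = (1/n²)·|Tr(T̃†G)|². Then F ≥ (1 − ‖E‖_F²/(4n))², with equality if and only if β = 0. -/
open Matrix

/-- The real block encoding of a complex `n × n` matrix: the `2 × 2` block
indexed by `(i, j)` is `[[Re A_ij, -Im A_ij], [Im A_ij, Re A_ij]]`. -/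
def blockEnc {n : ℕ} (A : Matrix (Fin n) (Fin n) ℂ) :
    Matrix (Fin n × Fin 2) (Fin n × Fin 2) ℝ :=
  fun p q =>
    !![(A p.1 q.1).re, -(A p.1 q.1).im; (A p.1 q.1).im, (A p.1 q.1).re] p.2 q.2

/-- with `E = R(G) - R(T̃)`, `α = Re((1/n)Tr(T̃†G))`,
`β = Im((1/n)Tr(T̃†G))` and `F = α² + β²`, one has
`F ≥ (1 - ‖E‖_F²/(4n))²`, with equality iff `β = 0`. -/
theorem fidelity_lower_bound {n : ℕ} (hn : 0 < n)
    (T G : Matrix (Fin n) (Fin n) ℂ)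
    (hT : Tᴴ * T = 1) (hG : Gᴴ * G = 1) :
    (((1 / (n : ℝ)) * (Tᴴ * G).trace).re ^ 2 + ((1 / (n : ℝ)) * (Tᴴ * G).trace).im ^ 2
        ≥ (1 - (((blockEnc G - blockEnc T) * (blockEnc G - blockEnc T)ᵀ).trace
              / (4 * (n : ℝ)))) ^ 2) ∧
    ((((1 / (n : ℝ)) * (Tᴴ * G).trace).re ^ 2 + ((1 / (n : ℝ)) * (Tᴴ * G).trace).im ^ 2
        = (1 - (((blockEnc G - blockEnc T) * (blockEnc G - blockEnc T)ᵀ).trace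
              / (4 * (n : ℝ)))) ^ 2)
      ↔ ((1 / (n : ℝ)) * (Tᴴ * G).trace).im = 0) := by
  have hn' : (n : ℝ) ≠ 0 := Nat.cast_ne_zero.mpr hn.ne'
  have hTn : ∑ j, ∑ i, ((T i j).re ^ 2 + (T i j).im ^ 2) = (n : ℝ) := by
    have := congrArg (fun M => (Matrix.trace M).re) hT
    simpa [trace, diag, mul_apply, conjTranspose_apply, Complex.re_sum,
      Complex.mul_re, sq] using this
  have hGn : ∑ j, ∑ i, ((G i j).re ^ 2 + (G i j).im ^ 2) = (n : ℝ) := by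
    have := congrArg (fun M => (Matrix.trace M).re) hG
    simpa [trace, diag, mul_apply, conjTranspose_apply, Complex.re_sum,
      Complex.mul_re, sq] using this
  have hcross : ((Tᴴ * G).trace).re
      = ∑ j, ∑ i, ((T i j).re * (G i j).re + (T i j).im * (G i j).im) := by
    simp [trace, diag, mul_apply, conjTranspose_apply, Complex.re_sum, Complex.mul_re]
  have hE : ((blockEnc G - blockEnc T) * (blockEnc G - blockEnc T)ᵀ).trace
      = ∑ j, ∑ i, (2 * (((G i j).re - (T i j).re) ^ 2 + ((G i j).im - (T i j).im) ^ 2)) := by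
    rw [Finset.sum_comm]
    simp only [trace, diag, mul_apply, transpose_apply, Matrix.sub_apply]
    rw [Fintype.sum_prod_type]
    simp only [Fintype.sum_prod_type, Fin.sum_univ_two, blockEnc,
      Matrix.cons_val', Matrix.cons_val_zero, Matrix.cons_val_one, Matrix.head_cons,
      Matrix.empty_val', Matrix.cons_val_fin_one, Matrix.head_fin_const, Matrix.of_apply]
    refine Finset.sum_congr rfl fun i _ => ?_
    rw [← Finset.sum_add_distrib]
    refine Finset.sum_congr rfl fun j _ => ?_
    ring
  have key : ((blockEnc G - blockEnc T) * (blockEnc G - blockEnc T)ᵀ).trace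
      = 4 * (n : ℝ) - 4 * ((Tᴴ * G).trace).re := by
    rw [hE]
    have pt : ∀ a b c d : ℝ, 2 * ((a - b) ^ 2 + (c - d) ^ 2)
        = 2 * (a ^ 2 + c ^ 2) + 2 * (b ^ 2 + d ^ 2) - 4 * (b * a + d * c) :=
      fun a b c d => by ring
    simp only [pt, Finset.sum_add_distrib, Finset.sum_sub_distrib, ← Finset.mul_sum]
    simp only [Finset.sum_add_distrib] at hTn hGn
    rw [hcross]
    simp only [Finset.sum_add_distrib]
    linarith
  have hre : ((1 / (n : ℝ)) * (Tᴴ * G).trace).re = ((Tᴴ * G).trace).re / n := by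
    simp only [Complex.mul_re, Complex.mul_im, Complex.ofReal_re, Complex.ofReal_im]
    push_cast
    field_simp
    simp
    field_simp
  have him : ((1 / (n : ℝ)) * (Tᴴ * G).trace).im = ((Tᴴ * G).trace).im / n := by
    simp only [Complex.mul_re, Complex.mul_im, Complex.ofReal_re, Complex.ofReal_im]
    push_cast
    field_simp
    simp
    field_simp
  rw [key, hre, him]
  set a := ((Tᴴ * G).trace).re
  set b := ((Tᴴ * G).trace).im
  have hrhs : 1 - (4 * (n : ℝ) - 4 * a) / (4 * n) = a / n := by
    field_simp
    ring
  rw [hrhs]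
  refine ⟨by nlinarith [sq_nonneg (b / (n : ℝ))], ?_, fun h => by rw [h]; ring⟩
  intro h
  have : (b / (n : ℝ)) ^ 2 = 0 := by linarith
  exact pow_eq_zero_iff (by norm_num) |>.mp this
end

section
/- Let 𝔾 be a finite set of unitary complex n×n matrices, let T̃ be a unitary complex n×n matrix, and for each g ∈ 𝔾 write T̃·g† = A_g + i·B_g with A_g and B_g real n×n matrices (so every entry of T̃·g† has modulus at most 1). Let r, s be real numbers with r² + s² = 1, let z : 𝔾 → {0,1} be a selection with Σ_{g∈𝔾} z_g = 1, and let G be a unitary complex n×n matrix with all entries of modulus at most 1. Then the nonlinear condition G = (r + i·s)·Σ_{g∈𝔾} z_g·(T̃·g†) holds if and only if for every g ∈ 𝔾 and all indices i,j: |Re(G)_{ij} − (r·(A_g)_{ij} − s·(B_g)_{ij})| ≤ 2·(1 − z_g) and |Im(G)_{ij} − (r·(B_g)_{ij} + s·(A_g)_{ij})| ≤ 2·(1 − z_g). -/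
open Matrix

/-- Proposition on HC-1 with global phase: for a finite family
of unitary gates `g i`, a unitary target `T̃`, a unit-modulus phase `r + i·s`,
and a binary one-hot selection `z`, the nonlinear condition
`G = (r + i·s) · Σ_i z_i · (T̃ · (g i)†)` is equivalent to the element-wise
linear inequalities with big-M constant `2·(1 - z_i)`. -/
theorem hc1_global_phase_reformulation {n : ℕ} {ι : Type*} [Fintype ι]
    (g : ι → Matrix (Fin n) (Fin n) ℂ)
    (hg : ∀ i, (g i)ᴴ * g i = 1 ∧ g i * (g i)ᴴ = 1)
    (T : Matrix (Fin n) (Fin n) ℂ) (hT : Tᴴ * T = 1)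
    (r s : ℝ) (hrs : r ^ 2 + s ^ 2 = 1)
    (z : ι → ℝ) (hz : ∀ i, z i = 0 ∨ z i = 1) (hz1 : ∑ i, z i = 1)
    (G : Matrix (Fin n) (Fin n) ℂ) (hGu : Gᴴ * G = 1)
    (hGbd : ∀ a b, ‖G a b‖ ≤ 1) :
    G = ((r : ℂ) + s * Complex.I) • ∑ i, (z i : ℂ) • (T * (g i)ᴴ)
      ↔ ∀ i, ∀ a b : Fin n,
          |(G a b).re - (r * ((T * (g i)ᴴ) a b).re - s * ((T * (g i)ᴴ) a b).im)|
              ≤ 2 * (1 - z i) ∧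
          |(G a b).im - (r * ((T * (g i)ᴴ) a b).im + s * ((T * (g i)ᴴ) a b).re)|
              ≤ 2 * (1 - z i) := by
  classical
  set c : ℂ := (r : ℂ) + s * Complex.I with hc
  -- modulus of the phase is 1
  have hcabs : ‖c‖ = 1 := by
    have hns : Complex.normSq c = 1 := by
      simp [hc, Complex.normSq_apply]
      nlinarith [hrs]
    have := Complex.sq_norm c
    nlinarith [norm_nonneg c, this, hns]
  -- entries of T * (g i)ᴴ are bounded by 1
  have hMbd : ∀ i a b, ‖(T * (g i)ᴴ) a b‖ ≤ 1 := by
    intro i a b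
    have hmem : T * (g i)ᴴ ∈ Matrix.unitaryGroup (Fin n) ℂ := by
      rw [Matrix.mem_unitaryGroup_iff']
      have hstar : star (T * (g i)ᴴ) = g i * Tᴴ := by
        simp [Matrix.star_eq_conjTranspose, Matrix.conjTranspose_mul]
      rw [hstar, Matrix.mul_assoc, ← Matrix.mul_assoc Tᴴ, hT, Matrix.one_mul, (hg i).2]
    simpa using entry_norm_bound_of_unitary hmem a b
  -- one-hot structure of z
  obtain ⟨i0, hi0⟩ : ∃ i, z i = 1 := by
    by_contra h
    push_neg at h
    have h0 : ∀ i, z i = 0 := fun i => (hz i).resolve_right (h i)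
    simp [h0] at hz1
  have hz0 : ∀ j, j ≠ i0 → z j = 0 := by
    intro j hj
    have hsum0 : ∑ i ∈ Finset.univ.erase i0, z i = 0 := by
      have := Finset.add_sum_erase Finset.univ z (Finset.mem_univ i0)
      rw [hz1, hi0] at this
      linarith
    have hnn : ∀ i ∈ Finset.univ.erase i0, 0 ≤ z i := by
      intro i _
      rcases hz i with h | h <;> simp [h]
    exact (Finset.sum_eq_zero_iff_of_nonneg hnn).mp hsum0 j
      (Finset.mem_erase.mpr ⟨hj, Finset.mem_univ j⟩)
  -- the selected sum collapses
  have hsum : ∑ i, (z i : ℂ) • (T * (g i)ᴴ) = T * (g i0)ᴴ := by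
    rw [Finset.sum_eq_single i0]
    · rw [hi0]; simp
    · intro j _ hj; rw [hz0 j hj]; simp
    · intro h; exact absurd (Finset.mem_univ i0) h
  constructor
  · intro hG i a b
    rcases hz i with h0 | h1
    · -- z i = 0 : big-M bound 2
      rw [h0]
      have hG1 : |(G a b).re| ≤ 1 := le_trans (Complex.abs_re_le_norm _) (hGbd a b)
      have hG2 : |(G a b).im| ≤ 1 := le_trans (Complex.abs_im_le_norm _) (hGbd a b)
      have hM : ‖c * (T * (g i)ᴴ) a b‖ ≤ 1 := by
        rw [norm_mul, hcabs, one_mul]; exact hMbd i a b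
      have hre : |(c * (T * (g i)ᴴ) a b).re| ≤ 1 :=
        le_trans (Complex.abs_re_le_norm _) hM
      have him : |(c * (T * (g i)ᴴ) a b).im| ≤ 1 :=
        le_trans (Complex.abs_im_le_norm _) hM
      have hreval : (c * (T * (g i)ᴴ) a b).re
          = r * ((T * (g i)ᴴ) a b).re - s * ((T * (g i)ᴴ) a b).im := by
        simp [hc, Complex.mul_re]
      have himval : (c * (T * (g i)ᴴ) a b).im
          = r * ((T * (g i)ᴴ) a b).im + s * ((T * (g i)ᴴ) a b).re := by
        simp [hc, Complex.mul_im]; try ring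
      rw [hreval] at hre
      rw [himval] at him
      constructor
      · have h3 : |(G a b).re - (r * ((T * (g i)ᴴ) a b).re - s * ((T * (g i)ᴴ) a b).im)|
            ≤ |(G a b).re| + |r * ((T * (g i)ᴴ) a b).re - s * ((T * (g i)ᴴ) a b).im| :=
          abs_sub _ _
        linarith
      · have h3 : |(G a b).im - (r * ((T * (g i)ᴴ) a b).im + s * ((T * (g i)ᴴ) a b).re)|
            ≤ |(G a b).im| + |r * ((T * (g i)ᴴ) a b).im + s * ((T * (g i)ᴴ) a b).re| :=
          abs_sub _ _
        linarith
    · -- z i = 1 : then i = i0 and equality holds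
      have hii : i = i0 := by
        by_contra h
        rw [hz0 i h] at h1
        norm_num at h1
      subst hii
      rw [hsum] at hG
      have hGe : G a b = c * (T * (g i)ᴴ) a b := by
        rw [hG]; simp
      rw [h1]
      constructor
      · rw [hGe]
        have : (c * (T * (g i)ᴴ) a b).re
            = r * ((T * (g i)ᴴ) a b).re - s * ((T * (g i)ᴴ) a b).im := by
          simp [hc, Complex.mul_re]
        rw [this]; simp
      · rw [hGe]
        have : (c * (T * (g i)ᴴ) a b).im
            = r * ((T * (g i)ᴴ) a b).im + s * ((T * (g i)ᴴ) a b).re := by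
          simp [hc, Complex.mul_im]; try ring
        rw [this]; simp
  · intro H
    rw [hsum]
    ext a b
    obtain ⟨h1, h2⟩ := H i0 a b
    rw [hi0] at h1 h2
    have h1' : (G a b).re - (r * ((T * (g i0)ᴴ) a b).re - s * ((T * (g i0)ᴴ) a b).im) = 0 := by
      have hnn := abs_nonneg ((G a b).re - (r * ((T * (g i0)ᴴ) a b).re - s * ((T * (g i0)ᴴ) a b).im))
      have : |(G a b).re - (r * ((T * (g i0)ᴴ) a b).re - s * ((T * (g i0)ᴴ) a b).im)| = 0 := by
        linarith
      exact abs_eq_zero.mp this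
    have h2' : (G a b).im - (r * ((T * (g i0)ᴴ) a b).im + s * ((T * (g i0)ᴴ) a b).re) = 0 := by
      have hnn := abs_nonneg ((G a b).im - (r * ((T * (g i0)ᴴ) a b).im + s * ((T * (g i0)ᴴ) a b).re))
      have : |(G a b).im - (r * ((T * (g i0)ᴴ) a b).im + s * ((T * (g i0)ᴴ) a b).re)| = 0 := by
        linarith
      exact abs_eq_zero.mp this
    have hre : (G a b).re = r * ((T * (g i0)ᴴ) a b).re - s * ((T * (g i0)ᴴ) a b).im := by
      linarith
    have him : (G a b).im = r * ((T * (g i0)ᴴ) a b).im + s * ((T * (g i0)ᴴ) a b).re := by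
      linarith
    have : (c • (T * (g i0)ᴴ)) a b = c * (T * (g i0)ᴴ) a b := by simp
    rw [this]
    apply Complex.ext
    · rw [hre]; simp [hc, Complex.mul_re]
    · rw [him]; simp [hc, Complex.mul_im]; try ring
end
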